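/- With A(z) = d X_{2N+2}(z) ⋯ X_1(z) as in the (m,n) = (2N+2, 2) case of the q-KP Lax matrix, A(z) is a matrix polynomial of degree N+1 in z, its leading coefficient A_{N+1} is lower triangular with diagonal entries t_1 ∏_{i=1}^{N+1} r_{2i−1}^{−1} and t_2 ∏_{i=1}^{N+1} r_{2i}^{−1}, and its constant term A_0 is upper triangular with diagonal entries θ_1 = t_1 ∏_{i=1}^{2N+2} x_{i,1} and θ_2 = t_2 ∏_{i=1}^{2N+2} x_{i,2}. -/

import Mathlib

open Matrix Polynomial

section Aux

variable {K : Type*} [CommRing K]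

/-- the basic factor matrix -/
private noncomputable def Mm (a b c : ℕ → K) (i : ℕ) : Matrix (Fin 2) (Fin 2) (Polynomial K) :=
  !![C (a i), 1; C (c i) * X, C (b i)]

/-- partial products -/
private noncomputable def Pp (M : ℕ → Matrix (Fin 2) (Fin 2) (Polynomial K)) (n : ℕ) :
    Matrix (Fin 2) (Fin 2) (Polynomial K) :=
  (List.ofFn fun i : Fin n => M i).reverse.prod

private lemma Pp_zero (M : ℕ → Matrix (Fin 2) (Fin 2) (Polynomial K)) : Pp M 0 = 1 := by
  simp [Pp]

private lemma Pp_succ (M : ℕ → Matrix (Fin 2) (Fin 2) (Polynomial K)) (n : ℕ) :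
    Pp M (n + 1) = M n * Pp M n := by
  unfold Pp
  rw [List.ofFn_succ']
  simp only [List.concat_eq_append, List.reverse_append, List.reverse_cons, List.reverse_nil,
    List.nil_append, List.singleton_append, List.prod_cons]
  rfl

private lemma deg_C_mul (k : K) {p : Polynomial K} {m : ℕ} (hp : p.natDegree ≤ m) :
    (C k * p).natDegree ≤ m :=
  le_trans natDegree_mul_le (by simpa using hp)

private lemma coeff_C_mul_top (k : K) {p : Polynomial K} {m : ℕ} (hp : p.natDegree ≤ m) :
    (C k * p).coeff (m + 1) = 0 :=
  coeff_eq_zero_of_natDegree_lt (lt_of_le_of_lt (deg_C_mul k hp) (Nat.lt_succ_self m))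

private lemma deg_CX_mul (k : K) {p : Polynomial K} {m : ℕ} (hp : p.natDegree ≤ m) :
    (C k * X * p).natDegree ≤ m + 1 := by
  refine le_trans natDegree_mul_le ?_
  have h1 : (C k * X : Polynomial K).natDegree ≤ 1 :=
    le_trans natDegree_mul_le (by simp [natDegree_X_le])
  omega

private lemma coeff_CX_mul_top (k : K) (p : Polynomial K) (m : ℕ) :
    (C k * X * p).coeff (m + 1) = k * p.coeff m := by
  rw [mul_assoc, coeff_C_mul, coeff_X_mul]

private lemma coeff_CX_mul_zero (k : K) (p : Polynomial K) :
    (C k * X * p).coeff 0 = 0 := by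
  rw [mul_assoc, coeff_C_mul, mul_coeff_zero]
  simp


private lemma step (a₁ b₁ c₁ a₂ b₂ c₂ : K) (p00 p01 p10 p11 : Polynomial K) (m : ℕ)
    (d00 : p00.natDegree ≤ m) (d01 : p01.natDegree ≤ m)
    (d10 : p10.natDegree ≤ m) (d11 : p11.natDegree ≤ m)
    (h01 : p01.coeff m = 0) (z10 : p10.coeff 0 = 0) :
    let q00 := C a₂ * (C a₁ * p00 + p10) + (C c₁ * X * p00 + C b₁ * p10)
    let q01 := C a₂ * (C a₁ * p01 + p11) + (C c₁ * X * p01 + C b₁ * p11)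
    let q10 := C c₂ * X * (C a₁ * p00 + p10) + C b₂ * (C c₁ * X * p00 + C b₁ * p10)
    let q11 := C c₂ * X * (C a₁ * p01 + p11) + C b₂ * (C c₁ * X * p01 + C b₁ * p11)
    q00.natDegree ≤ m + 1 ∧ q01.natDegree ≤ m + 1 ∧ q10.natDegree ≤ m + 1 ∧
    q11.natDegree ≤ m + 1 ∧
    q01.coeff (m + 1) = 0 ∧
    q00.coeff (m + 1) = c₁ * p00.coeff m ∧
    q11.coeff (m + 1) = c₂ * p11.coeff m ∧
    q10.coeff 0 = 0 ∧
    q00.coeff 0 = a₂ * a₁ * p00.coeff 0 ∧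
    q11.coeff 0 = b₂ * b₁ * p11.coeff 0 := by
  have dA : (C a₁ * p00 + p10).natDegree ≤ m :=
    le_trans (natDegree_add_le _ _) (max_le (deg_C_mul _ d00) d10)
  have dB : (C a₁ * p01 + p11).natDegree ≤ m :=
    le_trans (natDegree_add_le _ _) (max_le (deg_C_mul _ d01) d11)
  have dC : (C c₁ * X * p00 + C b₁ * p10).natDegree ≤ m + 1 :=
    le_trans (natDegree_add_le _ _)
      (max_le (deg_CX_mul _ d00) (le_trans (deg_C_mul _ d10) (Nat.le_succ m)))
  have dD : (C c₁ * X * p01 + C b₁ * p11).natDegree ≤ m + 1 :=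
    le_trans (natDegree_add_le _ _)
      (max_le (deg_CX_mul _ d01) (le_trans (deg_C_mul _ d11) (Nat.le_succ m)))
  have t00 : p00.coeff (m + 1) = 0 :=
    coeff_eq_zero_of_natDegree_lt (lt_of_le_of_lt d00 (Nat.lt_succ_self m))
  have t01 : p01.coeff (m + 1) = 0 :=
    coeff_eq_zero_of_natDegree_lt (lt_of_le_of_lt d01 (Nat.lt_succ_self m))
  have t10 : p10.coeff (m + 1) = 0 :=
    coeff_eq_zero_of_natDegree_lt (lt_of_le_of_lt d10 (Nat.lt_succ_self m))
  have t11 : p11.coeff (m + 1) = 0 :=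
    coeff_eq_zero_of_natDegree_lt (lt_of_le_of_lt d11 (Nat.lt_succ_self m))
  refine ⟨?_, ?_, ?_, ?_, ?_, ?_, ?_, ?_, ?_, ?_⟩
  · exact le_trans (natDegree_add_le _ _)
      (max_le (le_trans (deg_C_mul _ dA) (Nat.le_succ m)) dC)
  · exact le_trans (natDegree_add_le _ _)
      (max_le (le_trans (deg_C_mul _ dB) (Nat.le_succ m)) dD)
  · exact le_trans (natDegree_add_le _ _)
      (max_le (deg_CX_mul _ dA) (deg_C_mul _ dC))
  · exact le_trans (natDegree_add_le _ _)
      (max_le (deg_CX_mul _ dB) (deg_C_mul _ dD))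
  · simp only [coeff_add, coeff_C_mul, coeff_CX_mul_top, t00, t01, t10, t11, h01]; ring
  · simp only [coeff_add, coeff_C_mul, coeff_CX_mul_top, t00, t01, t10, t11, h01]; ring
  · simp only [coeff_add, coeff_C_mul, coeff_CX_mul_top, t00, t01, t10, t11, h01]; ring
  · simp only [coeff_add, coeff_C_mul, coeff_CX_mul_zero, z10]; ring
  · simp only [coeff_add, coeff_C_mul, coeff_CX_mul_zero, z10]; ring
  · simp only [coeff_add, coeff_C_mul, coeff_CX_mul_zero, z10]; ring

private lemma key (a b c : ℕ → K) (m : ℕ) :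
    (∀ i j, ((Pp (Mm a b c) (2 * m)) i j).natDegree ≤ m) ∧
    ((Pp (Mm a b c) (2 * m)) 0 1).coeff m = 0 ∧
    ((Pp (Mm a b c) (2 * m)) 0 0).coeff m = ∏ i ∈ Finset.range m, c (2 * i) ∧
    ((Pp (Mm a b c) (2 * m)) 1 1).coeff m = ∏ i ∈ Finset.range m, c (2 * i + 1) ∧
    ((Pp (Mm a b c) (2 * m)) 1 0).coeff 0 = 0 ∧
    ((Pp (Mm a b c) (2 * m)) 0 0).coeff 0 = ∏ i ∈ Finset.range (2 * m), a i ∧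
    ((Pp (Mm a b c) (2 * m)) 1 1).coeff 0 = ∏ i ∈ Finset.range (2 * m), b i := by
  induction m with
  | zero =>
    rw [show 2 * 0 = 0 from rfl, Pp_zero]
    refine ⟨?_, ?_, ?_, ?_, ?_, ?_, ?_⟩ <;>
      first
        | (intro i j; fin_cases i <;> fin_cases j <;> simp [Matrix.one_apply])
        | simp [Matrix.one_apply]
  | succ m ih =>
    obtain ⟨hdeg, h01, h00, h11, z10, z00, z11⟩ := ih
    have e : 2 * (m + 1) = 2 * m + 1 + 1 := by ring
    rw [e, Pp_succ, Pp_succ]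
    set P := Pp (Mm a b c) (2 * m) with hP
    have hPeta : P = !![P 0 0, P 0 1; P 1 0, P 1 1] := Matrix.eta_fin_two P
    rw [hPeta]
    rw [Mm, Mm, Matrix.mul_fin_two, Matrix.mul_fin_two]
    obtain ⟨q00deg, q01deg, q10deg, q11deg, q01top, q00top, q11top, q10z, q00z, q11z⟩ :=
      step (a (2*m)) (b (2*m)) (c (2*m)) (a (2*m+1)) (b (2*m+1)) (c (2*m+1))
        (P 0 0) (P 0 1) (P 1 0) (P 1 1) m
        (hdeg 0 0) (hdeg 0 1) (hdeg 1 0) (hdeg 1 1) h01 z10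
    simp only [one_mul] at *
    refine ⟨?_, ?_, ?_, ?_, ?_, ?_, ?_⟩
    · intro i j
      fin_cases i <;> fin_cases j <;>
        simp only [Matrix.cons_val', Matrix.cons_val_zero, Matrix.cons_val_one,
          Matrix.head_cons, Matrix.head_fin_const, Matrix.empty_val',
          Matrix.cons_val_fin_one, Matrix.of_apply, Fin.zero_eta, Fin.mk_one] <;>
        first
          | with_reducible exact q00deg | with_reducible exact q01deg
          | with_reducible exact q10deg | with_reducible exact q11deg
    · simpa using q01top
    · rw [Finset.prod_range_succ, ← h00]
      simpa using q00top.trans (mul_comm _ _)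
    · rw [Finset.prod_range_succ, ← h11]
      simpa using q11top.trans (mul_comm _ _)
    · simpa using q10z
    · rw [Finset.prod_range_succ, Finset.prod_range_succ, ← z00]
      have := q00z
      simp only [Matrix.cons_val', Matrix.cons_val_zero, Matrix.cons_val_one,
        Matrix.head_cons, Matrix.head_fin_const, Matrix.empty_val',
        Matrix.cons_val_fin_one, Matrix.of_apply]
      rw [this]; ring
    · rw [Finset.prod_range_succ, Finset.prod_range_succ, ← z11]
      have := q11z
      simp only [Matrix.cons_val', Matrix.cons_val_zero, Matrix.cons_val_one,
        Matrix.head_cons, Matrix.head_fin_const, Matrix.empty_val',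
        Matrix.cons_val_fin_one, Matrix.of_apply]
      rw [this]; ring


end Aux

theorem stmt_2 {K : Type*} [Field K] (N : ℕ)
    (x : Fin (2 * N + 2) → Fin 2 → K) (r : Fin (2 * N + 2) → K)
    (hr : ∀ i, r i ≠ 0) (t₁ t₂ : K)
    (X : Fin (2 * N + 2) → Matrix (Fin 2) (Fin 2) (Polynomial K))
    (hX : ∀ i, X i = !![C (x i 0), 1; C (r i)⁻¹ * Polynomial.X, C (x i 1)])
    (d : Matrix (Fin 2) (Fin 2) (Polynomial K))
    (hd : d = Matrix.diagonal ![C t₁, C t₂])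
    (A : Matrix (Fin 2) (Fin 2) (Polynomial K))
    (hA : A = d * ((List.ofFn X).reverse).prod) :
    (∀ a b : Fin 2, (A a b).natDegree ≤ N + 1) ∧
    (A 0 1).coeff (N + 1) = 0 ∧
    (A 0 0).coeff (N + 1) = t₁ * ∏ i : Fin (N + 1), (r ⟨2 * i.val, by omega⟩)⁻¹ ∧
    (A 1 1).coeff (N + 1) = t₂ * ∏ i : Fin (N + 1), (r ⟨2 * i.val + 1, by omega⟩)⁻¹ ∧
    (A 1 0).coeff 0 = 0 ∧
    (A 0 0).coeff 0 = t₁ * ∏ i, x i 0 ∧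
    (A 1 1).coeff 0 = t₂ * ∏ i, x i 1 := by
  classical
  set a : ℕ → K := fun i => if h : i < 2 * N + 2 then x ⟨i, h⟩ 0 else 0 with ha
  set b : ℕ → K := fun i => if h : i < 2 * N + 2 then x ⟨i, h⟩ 1 else 0 with hb
  set c : ℕ → K := fun i => if h : i < 2 * N + 2 then (r ⟨i, h⟩)⁻¹ else 0 with hc
  obtain ⟨hdeg, h01, h00, h11, z10, z00, z11⟩ := key a b c (N + 1)
  have h2 : 2 * (N + 1) = 2 * N + 2 := by ring
  rw [h2] at hdeg h01 h00 h11 z10 z00 z11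
  have hP : ((List.ofFn X).reverse).prod = Pp (Mm a b c) (2 * N + 2) := by
    have hXM : X = fun i : Fin (2 * N + 2) => Mm a b c (i : ℕ) := by
      funext i
      rw [hX, Mm]
      have hi : (i : ℕ) < 2 * N + 2 := i.isLt
      simp only [ha, hb, hc, hi, dif_pos, Fin.eta]
    rw [Pp, hXM]
  rw [hd, hP] at hA
  have hAe : ∀ i j, A i j = ![C t₁, C t₂] i * Pp (Mm a b c) (2 * N + 2) i j := by
    intro i j
    rw [hA, Matrix.diagonal_mul]
  have prodc0 : (∏ i : Fin (N + 1), (r ⟨2 * i.val, by omega⟩)⁻¹)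
      = ∏ i ∈ Finset.range (N + 1), c (2 * i) := by
    rw [← Fin.prod_univ_eq_prod_range (fun j => c (2 * j)) (N + 1)]
    refine Finset.prod_congr rfl fun i _ => ?_
    have hi : 2 * (i : ℕ) < 2 * N + 2 := by omega
    simp only [hc, hi, dif_pos]
  have prodc1 : (∏ i : Fin (N + 1), (r ⟨2 * i.val + 1, by omega⟩)⁻¹)
      = ∏ i ∈ Finset.range (N + 1), c (2 * i + 1) := by
    rw [← Fin.prod_univ_eq_prod_range (fun j => c (2 * j + 1)) (N + 1)]
    refine Finset.prod_congr rfl fun i _ => ?_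
    have hi : 2 * (i : ℕ) + 1 < 2 * N + 2 := by omega
    simp only [hc, hi, dif_pos]
  have proda : (∏ i, x i 0) = ∏ i ∈ Finset.range (2 * N + 2), a i := by
    rw [← Fin.prod_univ_eq_prod_range (fun j => a j) (2 * N + 2)]
    refine Finset.prod_congr rfl fun i _ => ?_
    have hi : (i : ℕ) < 2 * N + 2 := i.isLt
    simp only [ha, hi, dif_pos, Fin.eta]
  have prodb : (∏ i, x i 1) = ∏ i ∈ Finset.range (2 * N + 2), b i := by
    rw [← Fin.prod_univ_eq_prod_range (fun j => b j) (2 * N + 2)]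
    refine Finset.prod_congr rfl fun i _ => ?_
    have hi : (i : ℕ) < 2 * N + 2 := i.isLt
    simp only [hb, hi, dif_pos, Fin.eta]
  refine ⟨?_, ?_, ?_, ?_, ?_, ?_, ?_⟩
  · intro i j
    rw [hAe]
    fin_cases i <;>
      simp only [Matrix.cons_val_zero, Matrix.cons_val_one, Matrix.head_cons] <;>
      exact deg_C_mul _ (hdeg _ _)
  · rw [hAe]
    simp only [Matrix.cons_val_zero, coeff_C_mul, h01, mul_zero]
  · rw [hAe, prodc0]
    simp only [Matrix.cons_val_zero, coeff_C_mul, h00]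
  · rw [hAe, prodc1]
    simp only [Matrix.cons_val_one, Matrix.head_cons, Matrix.cons_val_zero, coeff_C_mul, h11]
  · rw [hAe]
    simp only [Matrix.cons_val_one, Matrix.head_cons, Matrix.cons_val_zero, coeff_C_mul, z10, mul_zero]
  · rw [hAe, proda]
    simp only [Matrix.cons_val_zero, coeff_C_mul, z00]
  · rw [hAe, prodb]
    simp only [Matrix.cons_val_one, Matrix.head_cons, Matrix.cons_val_zero, coeff_C_mul, z11]
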